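/- Let (X,d) be a metric space, let ε > 0 and D > 0, and let (x_n) and (y_n) be sequences in X such that ε ≤ d(x_n, y_n) ≤ 2ε for every n and all distances among the points {x_n : n ∈ ℕ} ∪ {y_n : n ∈ ℕ} are at most D. Then there exist an infinite set S ⊆ ℕ and a Katětov function F defined on the set {x_n : n ∈ S} ∪ {y_n : n ∈ S} such that |F(x_n) − F(y_n)| ≥ ε/4 for every n ∈ S. -/

import Mathlib

/-- A Katětov function on a subset `T` of a metric space `X`: a function which is
nonnegative on `T` and satisfies `|F p − F q| ≤ d(p, q) ≤ F p + F q` for all `p, q ∈ T`. -/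
def IsKatetovOn {X : Type*} [MetricSpace X] (T : Set X) (F : X → ℝ) : Prop :=
  (∀ p ∈ T, 0 ≤ F p) ∧
    ∀ p ∈ T, ∀ q ∈ T, |F p - F q| ≤ dist p q ∧ dist p q ≤ F p + F q


open Classical in
/-- Infinite Ramsey theorem for pairs with two colors, relative to an infinite subset. -/
theorem ramsey_pairs_two (r : ℕ → ℕ → Prop) (A : Set ℕ) (hA : A.Infinite) :
    ∃ S : Set ℕ, S ⊆ A ∧ S.Infinite ∧
      ((∀ n ∈ S, ∀ m ∈ S, n < m → r n m) ∨ (∀ n ∈ S, ∀ m ∈ S, n < m → ¬ r n m)) := by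
  classical
  -- step construction
  let good : Set ℕ → Set ℕ := fun B => {m ∈ B | sInf B < m ∧ r (sInf B) m}
  let bad : Set ℕ → Set ℕ := fun B => {m ∈ B | sInf B < m ∧ ¬ r (sInf B) m}
  have hsplit : ∀ B : Set ℕ, B.Infinite → (good B).Infinite ∨ (bad B).Infinite := by
    intro B hB
    have : good B ∪ bad B = {m ∈ B | sInf B < m} := by
      ext m; by_cases h : r (sInf B) m <;> simp [good, bad, h] <;> tauto
    have hinf : ({m ∈ B | sInf B < m} : Set ℕ).Infinite := by
      have : {m ∈ B | sInf B < m} = B \ {m | m ≤ sInf B} := by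
        ext m; simp [Set.mem_diff, not_le]
      rw [this]
      exact hB.diff (Set.finite_Iic (sInf B))
    rw [← this] at hinf
    exact Set.infinite_union.mp hinf
  let step : {B : Set ℕ // B.Infinite} → {B : Set ℕ // B.Infinite} := fun ⟨B, hB⟩ =>
    if h : (good B).Infinite then ⟨good B, h⟩ else ⟨bad B, (hsplit B hB).resolve_left h⟩
  let V : ℕ → {B : Set ℕ // B.Infinite} := fun k => step^[k] ⟨A, hA⟩
  have hVsucc : ∀ k, V (k + 1) = step (V k) := by
    intro k; simp only [V, Function.iterate_succ_apply']
  have hstep_key : ∀ B : {B : Set ℕ // B.Infinite}, ∀ m ∈ (step B).1,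
      m ∈ B.1 ∧ sInf B.1 < m ∧ (r (sInf B.1) m ↔ (good B.1).Infinite) := by
    rintro ⟨B, hB⟩ m hm
    simp only [step] at hm
    split_ifs at hm with h
    · exact ⟨hm.1, hm.2.1, iff_of_true hm.2.2 h⟩
    · exact ⟨hm.1, hm.2.1, iff_of_false hm.2.2 h⟩
  -- the chosen points
  let u : ℕ → ℕ := fun k => sInf (V k).1
  have humem : ∀ k, u k ∈ (V k).1 := fun k => Nat.sInf_mem (V k).2.nonempty
  have hVanti : ∀ k j, k ≤ j → (V j).1 ⊆ (V k).1 := by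
    intro k j hkj
    induction j with
    | zero => cases Nat.le_zero.mp hkj; exact fun _ h => h
    | succ j ih =>
      rcases Nat.lt_or_ge k (j+1) with h | h
      · intro m hm
        rw [hVsucc] at hm
        exact ih (Nat.lt_succ_iff.mp h) (hstep_key (V j) m hm).1
      · cases Nat.le_antisymm hkj h; exact fun _ h => h
  have hmemsucc : ∀ k j, k < j → u j ∈ (V (k + 1)).1 := by
    intro k j hkj
    exact hVanti (k+1) j hkj (humem j)
  have hkey : ∀ k j, k < j → u k < u j ∧ (r (u k) (u j) ↔ (good (V k).1).Infinite) := by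
    intro k j hkj
    have := hmemsucc k j hkj
    rw [hVsucc] at this
    have h := hstep_key (V k) (u j) this
    exact ⟨h.2.1, h.2.2⟩
  have humono : StrictMono u := strictMono_nat_of_lt_succ fun k => (hkey k (k+1) (Nat.lt_succ_self k)).1
  have huA : ∀ k, u k ∈ A := by
    intro k
    have := hVanti 0 k (Nat.zero_le k) (humem k)
    simpa [V] using this
  -- pigeonhole on the colors
  let K : Set ℕ := {k | (good (V k).1).Infinite}
  have : K.Infinite ∨ Kᶜ.Infinite := by
    by_contra h
    push_neg at h
    have := h.1.union h.2
    rw [Set.union_compl_self] at this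
    exact Set.infinite_univ this
  rcases this with hK | hK
  · refine ⟨u '' K, ?_, hK.image humono.injective.injOn, Or.inl ?_⟩
    · rintro _ ⟨k, _, rfl⟩; exact huA k
    · rintro _ ⟨k, hk, rfl⟩ _ ⟨j, hj, rfl⟩ hlt
      have hkj : k < j := humono.lt_iff_lt.mp hlt
      exact (hkey k j hkj).2.mpr hk
  · refine ⟨u '' Kᶜ, ?_, hK.image humono.injective.injOn, Or.inr ?_⟩
    · rintro _ ⟨k, _, rfl⟩; exact huA k
    · rintro _ ⟨k, hk, rfl⟩ _ ⟨j, hj, rfl⟩ hlt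
      have hkj : k < j := humono.lt_iff_lt.mp hlt
      exact fun hr => hk ((hkey k j hkj).2.mp hr)


theorem aux_katetov_main
    {X : Type*} [MetricSpace X] (ε D : ℝ) (hε : 0 < ε) (hD : 0 < D)
    (x y : ℕ → X)
    (hdist : ∀ n, ε ≤ dist (x n) (y n) ∧ dist (x n) (y n) ≤ 2 * ε)
    (hbdd : ∀ p ∈ Set.range x ∪ Set.range y, ∀ q ∈ Set.range x ∪ Set.range y,
      dist p q ≤ D)
    (ramsey : ∀ (r : ℕ → ℕ → Prop) (A : Set ℕ), A.Infinite →
      ∃ S : Set ℕ, S ⊆ A ∧ S.Infinite ∧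
        ((∀ n ∈ S, ∀ m ∈ S, n < m → r n m) ∨ (∀ n ∈ S, ∀ m ∈ S, n < m → ¬ r n m))) :
    ∃ S : Set ℕ, S.Infinite ∧ ∃ F : X → ℝ,
      ((∀ p ∈ (x '' S ∪ y '' S), 0 ≤ F p) ∧
        ∀ p ∈ (x '' S ∪ y '' S), ∀ q ∈ (x '' S ∪ y '' S),
          |F p - F q| ≤ dist p q ∧ dist p q ≤ F p + F q) ∧
      ∀ n ∈ S, ε / 4 ≤ |F (x n) - F (y n)| := by
  classical
  -- extracting three increasing elements of an infinite set
  have three : ∀ T : Set ℕ, T.Infinite → ∃ a ∈ T, ∃ b ∈ T, ∃ c ∈ T, a < b ∧ b < c := by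
    intro T hT
    obtain ⟨a, ha⟩ := hT.nonempty
    obtain ⟨b, hb, hab⟩ := hT.exists_gt a
    obtain ⟨c, hc, hbc⟩ := hT.exists_gt b
    exact ⟨a, ha, b, hb, c, hc, hab, hbc⟩
  -- first Ramsey application: r₁ n m := dist (y n) (x m) < ε/4
  obtain ⟨S₁, -, hS₁inf, hS₁⟩ := ramsey (fun n m => dist (y n) (x m) < ε / 4) Set.univ
    Set.infinite_univ
  have hS₁far : ∀ n ∈ S₁, ∀ m ∈ S₁, n < m → ε / 4 ≤ dist (y n) (x m) := by
    rcases hS₁ with h | h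
    · exfalso
      obtain ⟨a, ha, b, hb, c, hc, hab, hbc⟩ := three S₁ hS₁inf
      have h1 := h a ha b hb hab
      have h2 := h a ha c hc (hab.trans hbc)
      have h3 := h b hb c hc hbc
      have hd := (hdist b).1
      have : dist (x b) (y b) ≤ dist (x b) (x c) + dist (x c) (y b) := dist_triangle _ _ _
      have hxx : dist (x b) (x c) ≤ dist (x b) (y a) + dist (y a) (x c) := dist_triangle _ _ _
      have e1 : dist (x b) (y a) = dist (y a) (x b) := dist_comm _ _
      have e2 : dist (x c) (y b) = dist (y b) (x c) := dist_comm _ _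
      linarith
    · exact fun n hn m hm hnm => not_lt.mp (h n hn m hm hnm)
  -- second Ramsey application: r₂ n m := dist (x n) (y m) < ε/4
  obtain ⟨S, hSsub, hSinf, hS⟩ := ramsey (fun n m => dist (x n) (y m) < ε / 4) S₁ hS₁inf
  have hSfar : ∀ n ∈ S, ∀ m ∈ S, n < m → ε / 4 ≤ dist (x n) (y m) := by
    rcases hS with h | h
    · exfalso
      obtain ⟨a, ha, b, hb, c, hc, hab, hbc⟩ := three S hSinf
      have h1 := h a ha b hb hab
      have h2 := h a ha c hc (hab.trans hbc)
      have h3 := h b hb c hc hbc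
      have hd := (hdist b).1
      have : dist (x b) (y b) ≤ dist (x b) (y c) + dist (y c) (y b) := dist_triangle _ _ _
      have hyy : dist (y b) (y c) ≤ dist (y b) (x a) + dist (x a) (y c) := dist_triangle _ _ _
      have e1 : dist (y b) (x a) = dist (x a) (y b) := dist_comm _ _
      have e2 : dist (y c) (y b) = dist (y b) (y c) := dist_comm _ _
      linarith
    · exact fun n hn m hm hnm => not_lt.mp (h n hn m hm hnm)
  -- key separation: all y-points of S are ε/4-far from all x-points of S
  have hfar : ∀ n ∈ S, ∀ m ∈ S, ε / 4 ≤ dist (y n) (x m) := by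
    intro n hn m hm
    rcases lt_trichotomy n m with h | h | h
    · exact hS₁far n (hSsub hn) m (hSsub hm) h
    · subst h
      have := (hdist n).1
      rw [dist_comm]
      linarith
    · rw [dist_comm]; exact hSfar m hm n hn h
  -- define F
  set A : Set X := x '' S with hA
  have hAne : A.Nonempty := (hSinf.nonempty).image x
  set F : X → ℝ := fun p => D / 2 + min (Metric.infDist p A) (ε / 4) with hF
  have hFdef : ∀ p, F p = D / 2 + min (Metric.infDist p A) (ε / 4) := fun p => by rw [hF]
  clear_value F
  have hTsub : (x '' S ∪ y '' S) ⊆ Set.range x ∪ Set.range y := by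
    apply Set.union_subset_union <;> exact Set.image_subset_range _ _
  refine ⟨S, hSinf, F, ⟨?_, ?_⟩, ?_⟩
  · intro p _
    have := Metric.infDist_nonneg (x := p) (s := A)
    have : (0:ℝ) ≤ min (Metric.infDist p A) (ε / 4) := le_min this (by linarith)
    rw [hFdef]; linarith
  · intro p hp q hq
    constructor
    · have h1 : |Metric.infDist p A - Metric.infDist q A| ≤ dist p q := by
        rw [abs_sub_le_iff]
        constructor
        · have := Metric.infDist_le_infDist_add_dist (x := p) (y := q) (s := A)
          linarith
        · have := Metric.infDist_le_infDist_add_dist (x := q) (y := p) (s := A)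
          rw [dist_comm] at this; linarith
      have h2 : |min (Metric.infDist p A) (ε/4) - min (Metric.infDist q A) (ε/4)| ≤
          max |Metric.infDist p A - Metric.infDist q A| |ε/4 - ε/4| :=
        abs_min_sub_min_le_max _ _ _ _
      simp only [sub_self, abs_zero] at h2
      have h3 : max |Metric.infDist p A - Metric.infDist q A| 0 =
          |Metric.infDist p A - Metric.infDist q A| := max_eq_left (abs_nonneg _)
      rw [h3] at h2
      have : F p - F q = min (Metric.infDist p A) (ε/4) - min (Metric.infDist q A) (ε/4) := by
        rw [hFdef, hFdef]; ring
      rw [this]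
      linarith
    · have hFp : D / 2 ≤ F p := by
        have := Metric.infDist_nonneg (x := p) (s := A)
        have : (0:ℝ) ≤ min (Metric.infDist p A) (ε / 4) := le_min this (by linarith)
        rw [hFdef]; linarith
      have hFq : D / 2 ≤ F q := by
        have := Metric.infDist_nonneg (x := q) (s := A)
        have : (0:ℝ) ≤ min (Metric.infDist q A) (ε / 4) := le_min this (by linarith)
        rw [hFdef]; linarith
      have := hbdd p (hTsub hp) q (hTsub hq)
      linarith
  · intro n hn
    have hx0 : Metric.infDist (x n) A = 0 :=
      Metric.infDist_zero_of_mem ⟨n, hn, rfl⟩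
    have hyfar : ε / 4 ≤ Metric.infDist (y n) A := by
      by_contra h
      push_neg at h
      obtain ⟨z, hz, hzlt⟩ := (Metric.infDist_lt_iff hAne).mp h
      obtain ⟨m, hm, rfl⟩ := hz
      exact absurd hzlt (not_lt.mpr (hfar n hn m hm))
    have hFx : F (x n) = D / 2 := by
      rw [hFdef, hx0]
      rw [min_eq_left (by linarith : (0:ℝ) ≤ ε/4)]
      ring
    have hFy : F (y n) = D / 2 + ε / 4 := by
      rw [hFdef, min_eq_right hyfar]
    rw [hFx, hFy]
    rw [show D / 2 - (D / 2 + ε / 4) = -(ε/4) by ring, abs_neg, abs_of_nonneg (by linarith)]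

/-- Let `(X, d)` be a metric space, `ε > 0`, `D > 0`, and let `(x_n)`, `(y_n)` be sequences
in `X` with `ε ≤ d(x_n, y_n) ≤ 2ε` for all `n` and all distances among the points of
`{x_n} ∪ {y_n}` at most `D`. Then there are an infinite set `S ⊆ ℕ` and a Katětov function
`F` on `{x_n : n ∈ S} ∪ {y_n : n ∈ S}` with `|F(x_n) − F(y_n)| ≥ ε/4` for every `n ∈ S`. -/
theorem exists_infinite_subset_and_katetov_separating
    {X : Type*} [MetricSpace X] (ε D : ℝ) (hε : 0 < ε) (hD : 0 < D)
    (x y : ℕ → X)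
    (hdist : ∀ n, ε ≤ dist (x n) (y n) ∧ dist (x n) (y n) ≤ 2 * ε)
    (hbdd : ∀ p ∈ Set.range x ∪ Set.range y, ∀ q ∈ Set.range x ∪ Set.range y,
      dist p q ≤ D) :
    ∃ S : Set ℕ, S.Infinite ∧ ∃ F : X → ℝ,
      IsKatetovOn (x '' S ∪ y '' S) F ∧
      ∀ n ∈ S, ε / 4 ≤ |F (x n) - F (y n)| := by
  obtain ⟨S, h1, F, h2, h3⟩ := aux_katetov_main ε D hε hD x y hdist hbdd
    (fun r A hA => ramsey_pairs_two r A hA)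
  exact ⟨S, h1, F, h2, h3⟩
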